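/- Let d ≥ 1, R > 0, β > 0, let f : B_d(0,R) → ℝ be β-smooth (its gradient is β-Lipschitz), and suppose its minimum f* is attained at an interior point x* of B_d(0,R) with ∇f(x*) = 0. Let ε > 0 and δ ∈ (0,1) be such that the closed ball B(x*, √(ε/β)) is contained in B_d(0,R), and let λ ≥ (d·ln(βR²/ε) + 2·ln(1/δ))/ε. Then the Gibbs distribution D_f^λ on B_d(0,R) satisfies D_f^λ({x ∈ B_d(0,R) : f(x) ≥ f* + ε}) ≤ δ. -/

import Mathlib

open Real MeasureTheory

private theorem smooth_bound' (d : ℕ) (β : ℝ)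
    (f : EuclideanSpace ℝ (Fin d) → ℝ)
    (hdiff : Differentiable ℝ f)
    (hsmooth : ∀ x x' : EuclideanSpace ℝ (Fin d),
      ‖fderiv ℝ f x - fderiv ℝ f x'‖ ≤ β * ‖x - x'‖)
    (xstar : EuclideanSpace ℝ (Fin d))
    (hcrit : fderiv ℝ f xstar = 0)
    (x : EuclideanSpace ℝ (Fin d)) :
    f x ≤ f xstar + β / 2 * ‖x - xstar‖ ^ 2 := by
  set v := x - xstar with hv
  set h : ℝ → ℝ := fun t => β / 2 * ‖v‖ ^ 2 * t ^ 2 - f (xstar + t • v) with hh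
  have hc : ∀ t : ℝ, HasDerivAt (fun t : ℝ => xstar + t • v) v t := by
    intro t
    simpa using ((hasDerivAt_id t).smul_const v).const_add xstar
  have hg : ∀ t : ℝ, HasDerivAt h (β / 2 * ‖v‖ ^ 2 * (2 * t) - (fderiv ℝ f (xstar + t • v)) v) t := by
    intro t
    have h1 : HasDerivAt (fun t : ℝ => f (xstar + t • v)) ((fderiv ℝ f (xstar + t • v)) v) t :=
      (hdiff (xstar + t • v)).hasFDerivAt.comp_hasDerivAt t (hc t)
    have h2 : HasDerivAt (fun t : ℝ => β / 2 * ‖v‖ ^ 2 * t ^ 2) (β / 2 * ‖v‖ ^ 2 * (2 * t)) t := by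
      simpa using ((hasDerivAt_pow 2 t).const_mul (β / 2 * ‖v‖ ^ 2))
    exact h2.sub h1
  have hmono : MonotoneOn h (Set.Icc 0 1) := by
    apply monotoneOn_of_deriv_nonneg (convex_Icc 0 1)
    · exact (Differentiable.continuous (fun t => (hg t).differentiableAt)).continuousOn
    · intro t ht
      exact ((hg t).differentiableAt).differentiableWithinAt
    · intro t ht
      rw [interior_Icc] at ht
      rw [(hg t).deriv]
      have hb : ‖(fderiv ℝ f (xstar + t • v)) v‖ ≤ β * t * ‖v‖ ^ 2 := by
        have := (fderiv ℝ f (xstar + t • v) - fderiv ℝ f xstar).le_opNorm v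
        rw [hcrit] at this
        simp only [sub_zero] at this
        calc ‖(fderiv ℝ f (xstar + t • v)) v‖ ≤ ‖fderiv ℝ f (xstar + t • v)‖ * ‖v‖ := by
              simpa using this
          _ ≤ (β * ‖(xstar + t • v) - xstar‖) * ‖v‖ := by
              gcongr
              simpa [hcrit] using hsmooth (xstar + t • v) xstar
          _ = β * t * ‖v‖ ^ 2 := by
              simp [norm_smul, abs_of_pos ht.1]
              ring
      have : (fderiv ℝ f (xstar + t • v)) v ≤ β * t * ‖v‖ ^ 2 :=
        le_trans (le_abs_self _) hb
      nlinarith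
  have := hmono (Set.left_mem_Icc.2 zero_le_one) (Set.right_mem_Icc.2 zero_le_one) zero_le_one
  have hx : xstar + v = x := by rw [hv]; abel
  simp [hh, hx] at this
  nlinarith [this]

set_option maxHeartbeats 1000000 in
theorem sampling_implies_optimization_smooth (d : ℕ) (hd : 1 ≤ d)
    (R : ℝ) (hR : 0 < R) (β : ℝ) (hβ : 0 < β)
    (f : EuclideanSpace ℝ (Fin d) → ℝ)
    (hdiff : Differentiable ℝ f)
    (hsmooth : ∀ x x' : EuclideanSpace ℝ (Fin d),
      ‖fderiv ℝ f x - fderiv ℝ f x'‖ ≤ β * ‖x - x'‖)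
    (xstar : EuclideanSpace ℝ (Fin d)) (hxstar : ‖xstar‖ < R)
    (hcrit : fderiv ℝ f xstar = 0)
    (hmin : ∀ x ∈ Metric.closedBall (0 : EuclideanSpace ℝ (Fin d)) R, f xstar ≤ f x)
    (ε : ℝ) (hε : 0 < ε)
    (hball : Metric.closedBall xstar (Real.sqrt (ε / β)) ⊆
      Metric.closedBall (0 : EuclideanSpace ℝ (Fin d)) R)
    (δ : ℝ) (hδ : 0 < δ) (hδ' : δ < 1)
    (lam : ℝ)
    (hlam : ((d : ℝ) * Real.log (β * R ^ 2 / ε) + 2 * Real.log (1 / δ)) / ε ≤ lam) :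
    (∫ x in {x ∈ Metric.closedBall (0 : EuclideanSpace ℝ (Fin d)) R |
        f xstar + ε ≤ f x}, Real.exp (-(lam * f x))) /
      (∫ x in Metric.closedBall (0 : EuclideanSpace ℝ (Fin d)) R,
        Real.exp (-(lam * f x))) ≤ δ := by
  set r : ℝ := Real.sqrt (ε / β) with hrdef
  have hεβ : 0 < ε / β := div_pos hε hβ
  have hr : 0 < r := Real.sqrt_pos.2 hεβ
  have hr2 : r ^ 2 = ε / β := Real.sq_sqrt hεβ.le
  -- r ≤ R
  have hrR : r ≤ R := by
    by_cases hx0 : xstar = 0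
    · have hp : xstar + r • (EuclideanSpace.single (⟨0, hd⟩ : Fin d) (1:ℝ)) ∈
          Metric.closedBall xstar r := by
        rw [Metric.mem_closedBall, dist_eq_norm, add_sub_cancel_left, norm_smul,
          EuclideanSpace.norm_single, norm_one, mul_one, Real.norm_eq_abs, abs_of_pos hr]
      have := hball hp
      rw [Metric.mem_closedBall, dist_eq_norm, sub_zero, hx0] at this
      rw [zero_add, norm_smul, EuclideanSpace.norm_single, norm_one, mul_one,
        Real.norm_eq_abs, abs_of_pos hr] at this
      exact this
    · have hxn : 0 < ‖xstar‖ := norm_pos_iff.2 hx0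
      have hp : xstar + (r / ‖xstar‖) • xstar ∈ Metric.closedBall xstar r := by
        rw [Metric.mem_closedBall, dist_eq_norm, add_sub_cancel_left, norm_smul,
          Real.norm_eq_abs, abs_of_pos (div_pos hr hxn), div_mul_cancel₀ _ hxn.ne']
      have := hball hp
      rw [Metric.mem_closedBall, dist_eq_norm, sub_zero] at this
      have heq : ‖xstar + (r / ‖xstar‖) • xstar‖ = ‖xstar‖ + r := by
        have : xstar + (r / ‖xstar‖) • xstar = (1 + r / ‖xstar‖) • xstar := by
          rw [add_smul, one_smul]
        rw [this, norm_smul, Real.norm_eq_abs, abs_of_pos (by positivity), add_mul, one_mul,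
          div_mul_cancel₀ _ hxn.ne']
      rw [heq] at this
      linarith
  -- log(β R²/ε) ≥ 0
  have hβR : (1 : ℝ) ≤ β * R ^ 2 / ε := by
    rw [le_div_iff₀ hε]
    have : ε / β ≤ R ^ 2 := by rw [← hr2]; nlinarith
    rw [div_le_iff₀ hβ] at this
    linarith
  have hL : 0 ≤ Real.log (β * R ^ 2 / ε) := Real.log_nonneg hβR
  have hlogδ : 0 < Real.log (1 / δ) := Real.log_pos (by rw [lt_div_iff₀ hδ]; linarith)
  have hlam0 : 0 ≤ lam := le_trans (by positivity) hlam
  -- f ≤ f* + ε/2 on small ball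
  have key : ∀ x ∈ Metric.closedBall xstar r, f x ≤ f xstar + ε / 2 := by
    intro x hx
    rw [Metric.mem_closedBall, dist_eq_norm] at hx
    have h1 := smooth_bound' d β f hdiff hsmooth xstar hcrit x
    have h2 : ‖x - xstar‖ ^ 2 ≤ r ^ 2 := by nlinarith [norm_nonneg (x - xstar)]
    rw [hr2] at h2
    have h3 : β * (ε / β) = ε := mul_div_cancel₀ _ hβ.ne'
    nlinarith
  -- measure-theoretic setup
  set g : EuclideanSpace ℝ (Fin d) → ℝ := fun x => Real.exp (-(lam * f x)) with hgdef
  have hgc : Continuous g := Real.continuous_exp.comp ((continuous_const.mul hdiff.continuous).neg)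
  set BR := Metric.closedBall (0 : EuclideanSpace ℝ (Fin d)) R with hBR
  set S : Set (EuclideanSpace ℝ (Fin d)) := {x ∈ BR | f xstar + ε ≤ f x} with hS
  have hSsub : S ⊆ BR := fun x hx => hx.1
  have hSm : MeasurableSet S := by
    have : S = BR ∩ {x : EuclideanSpace ℝ (Fin d) | f xstar + ε ≤ f x} := rfl
    rw [this]
    exact Metric.isClosed_closedBall.measurableSet.inter
      (measurableSet_le measurable_const hdiff.continuous.measurable)
  have hintR : IntegrableOn g BR volume :=
    hgc.continuousOn.integrableOn_compact (isCompact_closedBall 0 R)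
  have hintS : IntegrableOn g S volume := hintR.mono_set hSsub
  have hintr : IntegrableOn g (Metric.closedBall xstar r) volume := hintR.mono_set hball
  set E1 : ℝ := Real.exp (-(lam * (f xstar + ε))) with hE1
  set E2 : ℝ := Real.exp (-(lam * (f xstar + ε / 2))) with hE2
  -- volumes
  have hvolR : (volume BR).toReal = R ^ d * (volume (Metric.closedBall (0 : EuclideanSpace ℝ (Fin d)) 1)).toReal := by
    rw [hBR, Measure.addHaar_closedBall' _ _ hR.le, finrank_euclideanSpace_fin,
      ENNReal.toReal_mul, ENNReal.toReal_ofReal (by positivity)]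
  have hvolr : (volume (Metric.closedBall xstar r)).toReal
      = r ^ d * (volume (Metric.closedBall (0 : EuclideanSpace ℝ (Fin d)) 1)).toReal := by
    rw [Measure.addHaar_closedBall' _ _ hr.le, finrank_euclideanSpace_fin,
      ENNReal.toReal_mul, ENNReal.toReal_ofReal (by positivity)]
  set c : ℝ := (volume (Metric.closedBall (0 : EuclideanSpace ℝ (Fin d)) 1)).toReal with hc
  have hcpos : 0 < c := by
    rw [hc]
    exact ENNReal.toReal_pos (Metric.measure_closedBall_pos volume _ one_pos).ne'
      measure_closedBall_lt_top.ne
  -- numerator bound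
  have hnum : (∫ x in S, g x) ≤ E1 * (R ^ d * c) := by
    calc (∫ x in S, g x) ≤ ∫ _x in S, E1 := by
          apply setIntegral_mono_on hintS (integrableOn_const (ne_of_lt ?_)) hSm
          · intro x hx
            rw [hgdef, hE1]
            apply Real.exp_le_exp.2
            have := hx.2
            nlinarith
          · exact lt_of_le_of_lt (measure_mono hSsub) measure_closedBall_lt_top
      _ = (volume S).toReal * E1 := by rw [setIntegral_const]; simp [Measure.real]
      _ ≤ (volume BR).toReal * E1 := by
          apply mul_le_mul_of_nonneg_right _ (Real.exp_pos _).le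
          exact ENNReal.toReal_mono measure_closedBall_lt_top.ne (measure_mono hSsub)
      _ = E1 * (R ^ d * c) := by rw [hvolR]; ring
  -- denominator bound
  have hden : E2 * (r ^ d * c) ≤ ∫ x in BR, g x := by
    calc E2 * (r ^ d * c) = (volume (Metric.closedBall xstar r)).toReal * E2 := by
          rw [hvolr]; ring
      _ = ∫ _x in Metric.closedBall xstar r, E2 := by rw [setIntegral_const]; simp [Measure.real]
      _ ≤ ∫ x in Metric.closedBall xstar r, g x := by
          apply setIntegral_mono_on (integrableOn_const measure_closedBall_lt_top.ne)
            hintr Metric.isClosed_closedBall.measurableSet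
          intro x hx
          rw [hgdef, hE2]
          apply Real.exp_le_exp.2
          have := key x hx
          nlinarith
      _ ≤ ∫ x in BR, g x := by
          apply setIntegral_mono_set hintR
          · exact Filter.Eventually.of_forall fun x => (Real.exp_pos _).le
          · exact Filter.Eventually.of_forall (fun x hx => hball hx)
  have hdenpos : 0 < ∫ x in BR, g x :=
    lt_of_lt_of_le (by positivity) hden
  rw [div_le_iff₀ hdenpos]
  -- main inequality: E1 * R^d ≤ δ * E2 * r^d
  have hmain : E1 * (R ^ d * c) ≤ δ * (E2 * (r ^ d * c)) := by
    have hkey : E1 * R ^ d ≤ δ * (E2 * r ^ d) := by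
      rw [← Real.exp_log (show (0:ℝ) < E1 * R ^ d by positivity),
        ← Real.exp_log (show (0:ℝ) < δ * (E2 * r ^ d) by positivity)]
      apply Real.exp_le_exp.2
      rw [Real.log_mul (by positivity) (by positivity),
        Real.log_mul (by positivity) (by positivity),
        Real.log_mul (by positivity) (by positivity),
        hE1, hE2, Real.log_exp, Real.log_exp, Real.log_pow, Real.log_pow]
      have hlr : Real.log r = (Real.log ε - Real.log β) / 2 := by
        rw [hrdef, Real.log_sqrt hεβ.le, Real.log_div hε.ne' hβ.ne']
      have hLL : Real.log (β * R ^ 2 / ε)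
          = Real.log β + 2 * Real.log R - Real.log ε := by
        rw [Real.log_div (by positivity) hε.ne', Real.log_mul hβ.ne' (by positivity),
          Real.log_pow]
        push_cast; ring
      have hlam' : (d : ℝ) * Real.log (β * R ^ 2 / ε) + 2 * Real.log (1 / δ) ≤ lam * ε := by
        rw [div_le_iff₀ hε] at hlam
        linarith
      have hlogδ' : Real.log (1 / δ) = - Real.log δ := by
        rw [Real.log_div one_ne_zero hδ.ne', Real.log_one]; ring
      rw [hlr] at *
      rw [hLL, hlogδ'] at hlam'
      nlinarith [hlam']
    calc E1 * (R ^ d * c) = (E1 * R ^ d) * c := by ring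
      _ ≤ (δ * (E2 * r ^ d)) * c := mul_le_mul_of_nonneg_right hkey hcpos.le
      _ = δ * (E2 * (r ^ d * c)) := by ring
  calc (∫ x in S, g x) ≤ E1 * (R ^ d * c) := hnum
    _ ≤ δ * (E2 * (r ^ d * c)) := hmain
    _ ≤ δ * ∫ x in BR, g x := mul_le_mul_of_nonneg_left hden hδ.le
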